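/- Let λ > 0 and μ > 0, and let x : ℝ → ℝ × ℝ be a solution of the constant-mobility system, i.e. x is differentiable with x'(t) = F(x(t)) for all t, where F(z,m) = ((μ/2)·z·|z| + λ·z + 2·m, −μ·m·|z| − μ·z). If x is periodic with some period T > 0 (x(t + T) = x(t) for all t) and x is not constant, then a contradiction follows; equivalently, every periodic solution of the constant-mobility system is constant. -/

import Mathlib

open Filter

private lemma hasDerivAt_fst_comp {f : ℝ → ℝ × ℝ} {v : ℝ × ℝ} {t : ℝ}
    (h : HasDerivAt f v t) : HasDerivAt (fun t => (f t).1) v.1 t := by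
  have := (ContinuousLinearMap.fst ℝ ℝ ℝ).hasFDerivAt.comp t h.hasFDerivAt
  exact (by simpa using this.hasDerivAt : HasDerivAt (Prod.fst ∘ f) v.1 t)

private lemma hasDerivAt_snd_comp {f : ℝ → ℝ × ℝ} {v : ℝ × ℝ} {t : ℝ}
    (h : HasDerivAt f v t) : HasDerivAt (fun t => (f t).2) v.2 t := by
  have := (ContinuousLinearMap.snd ℝ ℝ ℝ).hasFDerivAt.comp t h.hasFDerivAt
  exact (by simpa using this.hasDerivAt : HasDerivAt (Prod.snd ∘ f) v.2 t)

private lemma hasDerivAt_mul_abs (a : ℝ) :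
    HasDerivAt (fun w : ℝ => w * |w|) (2 * |a|) a := by
  rcases lt_trichotomy a 0 with h | h | h
  · have hg : HasDerivAt (fun w : ℝ => -(w * w)) (2 * |a|) a := by
      have := ((hasDerivAt_id a).mul (hasDerivAt_id a)).neg
      refine this.congr_deriv ?_
      simp only [id_eq]
      rw [abs_of_neg h]; ring
    refine hg.congr_of_eventuallyEq ?_
    filter_upwards [eventually_lt_nhds h] with w hw
    rw [abs_of_neg hw]; ring
  · subst h
    rw [hasDerivAt_iff_tendsto_slope]
    have habs : Tendsto (fun w : ℝ => |w|) (nhdsWithin 0 {(0:ℝ)}ᶜ) (nhds 0) := by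
      have : Tendsto (fun w : ℝ => |w|) (nhds 0) (nhds 0) := by
        simpa using continuous_abs.tendsto (0 : ℝ)
      exact this.mono_left nhdsWithin_le_nhds
    rw [show (2 * |(0:ℝ)| : ℝ) = 0 by simp]
    refine squeeze_zero_norm' ?_ habs
    filter_upwards [self_mem_nhdsWithin] with w hw
    have hw' : w ≠ 0 := hw
    rw [slope_def_field]
    simp only [mul_zero, abs_zero, sub_zero, zero_mul]
    rw [Real.norm_eq_abs, abs_div, abs_mul, abs_abs, mul_div_assoc,
      div_self (abs_ne_zero.mpr hw'), mul_one]
  · have hg : HasDerivAt (fun w : ℝ => w * w) (2 * |a|) a := by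
      have := (hasDerivAt_id a).mul (hasDerivAt_id a)
      refine this.congr_deriv ?_
      simp only [id_eq]
      rw [abs_of_pos h]; ring
    refine hg.congr_of_eventuallyEq ?_
    filter_upwards [eventually_gt_nhds h] with w hw
    rw [abs_of_pos hw]

private lemma hasDerivAt_abs_cube (a : ℝ) :
    HasDerivAt (fun w : ℝ => |w| ^ 3) (3 * (a * |a|)) a := by
  rcases lt_trichotomy a 0 with h | h | h
  · have hg : HasDerivAt (fun w : ℝ => -(w ^ 3)) (3 * (a * |a|)) a := by
      have := (hasDerivAt_pow 3 a).neg
      refine this.congr_deriv ?_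
      rw [abs_of_neg h]; push_cast; ring
    refine hg.congr_of_eventuallyEq ?_
    filter_upwards [eventually_lt_nhds h] with w hw
    rw [abs_of_neg hw]; ring
  · subst h
    rw [hasDerivAt_iff_tendsto_slope]
    have hsq : Tendsto (fun w : ℝ => |w| ^ 2) (nhdsWithin 0 {(0:ℝ)}ᶜ) (nhds 0) := by
      have : Tendsto (fun w : ℝ => |w| ^ 2) (nhds 0) (nhds 0) := by
        have := (continuous_abs.pow 2).tendsto (0 : ℝ)
        simp at this; exact this
      exact this.mono_left nhdsWithin_le_nhds
    rw [show (3 * ((0:ℝ) * |(0:ℝ)|) : ℝ) = 0 by simp]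
    refine squeeze_zero_norm' ?_ hsq
    filter_upwards [self_mem_nhdsWithin] with w hw
    have hw' : w ≠ 0 := hw
    rw [slope_def_field]
    have hsl : (|w| ^ 3 - |(0:ℝ)| ^ 3) / (w - 0) = |w| ^ 3 / w := by simp
    rw [hsl, Real.norm_eq_abs, abs_div, abs_pow, abs_abs, pow_succ,
      mul_div_assoc, div_self (abs_ne_zero.mpr hw'), mul_one]
  · have hg : HasDerivAt (fun w : ℝ => w ^ 3) (3 * (a * |a|)) a := by
      have := hasDerivAt_pow 3 a
      refine this.congr_deriv ?_
      rw [abs_of_pos h]; push_cast; ring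
    refine hg.congr_of_eventuallyEq ?_
    filter_upwards [eventually_gt_nhds h] with w hw
    rw [abs_of_pos hw]

/-- Every periodic solution of the constant-mobility system is constant: if
`x' = F(x)` with `F(z,m) = ((μ/2)·z·|z| + λ·z + 2·m, −μ·m·|z| − μ·z)` and `x` has
period `T > 0`, then `x` is constant. -/
theorem constant_mobility_no_periodic_orbits (lam mu : ℝ) (hlam : 0 < lam) (hmu : 0 < mu)
    (x : ℝ → ℝ × ℝ)
    (hx : ∀ t : ℝ, HasDerivAt x
      ((mu / 2) * (x t).1 * |(x t).1| + lam * (x t).1 + 2 * (x t).2,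
        -(mu * (x t).2 * |(x t).1|) - mu * (x t).1) t)
    (T : ℝ) (hT : 0 < T) (hper : ∀ t : ℝ, x (t + T) = x t) :
    ∀ s t : ℝ, x s = x t := by
  set z : ℝ → ℝ := fun t => (x t).1 with hzdef
  set m : ℝ → ℝ := fun t => (x t).2 with hmdef
  set P : ℝ → ℝ := fun t => mu / 2 * (x t).1 * |(x t).1| + lam * (x t).1 + 2 * (x t).2
    with hPdef
  set Q : ℝ → ℝ := fun t => -(mu * (x t).2 * |(x t).1|) - mu * (x t).1 with hQdef
  have hz : ∀ t, HasDerivAt z (P t) t := fun t => hasDerivAt_fst_comp (hx t)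
  have hm : ∀ t, HasDerivAt m (Q t) t := fun t => hasDerivAt_snd_comp (hx t)
  -- derivative of P
  have hP : ∀ t, HasDerivAt P
      (lam * P t + (mu ^ 2 / 2 * (z t) ^ 3 + lam * mu * (z t * |z t|) - 2 * mu * z t)) t := by
    intro t
    have h1 : HasDerivAt (fun t => mu / 2 * (z t * |z t|)) (mu / 2 * (2 * |z t| * P t)) t :=
      (((hasDerivAt_mul_abs (z t)).comp t (hz t))).const_mul (mu / 2)
    have h2 : HasDerivAt P (mu / 2 * (2 * |z t| * P t) + lam * P t + 2 * Q t) t := by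
      refine HasDerivAt.congr_of_eventuallyEq
        ((h1.add ((hz t).const_mul lam)).add ((hm t).const_mul 2))
        (Filter.Eventually.of_forall fun u => ?_)
      simp only [hPdef, hzdef, hmdef, Pi.add_apply]
      ring
    convert h2 using 1
    have habs : |(x t).1| * |(x t).1| = (x t).1 * (x t).1 := abs_mul_abs_self _
    simp only [hPdef, hQdef, hzdef, hmdef]
    linear_combination (-(mu ^ 2 / 2) * (x t).1) * habs
  set G : ℝ → ℝ := fun w => mu ^ 2 / 8 * w ^ 4 + lam * mu / 3 * |w| ^ 3 - mu * w ^ 2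
    with hGdef
  have hG : ∀ w, HasDerivAt G
      (mu ^ 2 / 2 * w ^ 3 + lam * mu * (w * |w|) - 2 * mu * w) w := by
    intro w
    have := (((hasDerivAt_pow 4 w).const_mul (mu ^ 2 / 8)).add
      ((hasDerivAt_abs_cube w).const_mul (lam * mu / 3))).sub
      ((hasDerivAt_pow 2 w).const_mul mu)
    refine this.congr_deriv ?_
    push_cast; ring
  set W : ℝ → ℝ := fun t => (P t) ^ 2 / 2 - G (z t) with hWdef
  have hW : ∀ t, HasDerivAt W (lam * (P t) ^ 2) t := by
    intro t
    have h1 : HasDerivAt (fun t => (P t) ^ 2 / 2)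
        ((2 * P t ^ 1 * (lam * P t + (mu ^ 2 / 2 * (z t) ^ 3 + lam * mu * (z t * |z t|)
          - 2 * mu * z t))) / 2) t := ((hP t).pow 2).div_const 2
    have h2 : HasDerivAt (fun t => G (z t))
        ((mu ^ 2 / 2 * (z t) ^ 3 + lam * mu * (z t * |z t|) - 2 * mu * z t) * P t) t :=
      (hG (z t)).comp t (hz t)
    have := h1.sub h2
    refine this.congr_deriv ?_
    ring
  -- W is monotone and periodic, hence constant
  have hmono : Monotone W := by
    apply monotone_of_deriv_nonneg (fun t => (hW t).differentiableAt)
    intro t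
    rw [(hW t).deriv]
    positivity
  have hWper : ∀ t, W (t + T) = W t := by
    intro t
    simp only [hWdef, hPdef, hzdef, hper t]
  have hconst : ∀ s t, W s = W t := by
    have key : ∀ s t : ℝ, s ≤ t → W s = W t := by
      intro s t hst
      obtain ⟨n, hn⟩ : ∃ n : ℕ, t ≤ s + n * T := by
        refine ⟨⌈(t - s) / T⌉₊, ?_⟩
        have h1 := Nat.le_ceil ((t - s) / T)
        rw [div_le_iff₀ hT] at h1
        linarith
      have h2 : W (s + n * T) = W s := Function.Periodic.nat_mul hWper n s
      have h3 : W t ≤ W (s + n * T) := hmono hn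
      have h4 : W s ≤ W t := hmono hst
      rw [h2] at h3
      linarith
    intro s t
    rcases le_total s t with h | h
    · exact key s t h
    · exact (key t s h).symm
  -- hence P vanishes identically
  have hP0 : ∀ t, P t = 0 := by
    intro t
    have hWc : HasDerivAt W 0 t := by
      have hfun : W = fun _ => W 0 := funext fun s => hconst s 0
      rw [hfun]
      exact hasDerivAt_const t (W 0)
    have h0 : lam * (P t) ^ 2 = 0 := (hW t).unique hWc
    have hsq : (P t) ^ 2 = 0 := by
      rcases mul_eq_zero.mp h0 with h | h
      · exact absurd h (ne_of_gt hlam)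
      · exact h
    exact pow_eq_zero_iff (two_ne_zero) |>.mp hsq
  -- z is constant
  have hzconst : ∀ s t, z s = z t := by
    apply is_const_of_deriv_eq_zero
    · intro t
      exact ((hP0 t) ▸ hz t).differentiableAt
    · intro t
      have := (hP0 t) ▸ hz t
      exact this.deriv
  -- m is determined by z since P = 0
  have hmval : ∀ t, m t = (-(mu / 2 * z t * |z t|) - lam * z t) / 2 := by
    intro t
    have hpe := hP0 t
    simp only [hPdef, hzdef, hmdef] at hpe ⊢
    linear_combination hpe / 2
  intro s t
  have h1 : z s = z t := hzconst s t
  have h2 : m s = m t := by rw [hmval s, hmval t, h1]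
  exact Prod.ext h1 h2
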